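/- Let g₀ : ℝⁿ → ℝ and g : ℝⁿ → ℝᵐ be twice continuously differentiable, L(q₁,q₂) := g₀(q₁) + ⟨q₂, g(q₁)⟩. Suppose q₁ : ℝ → ℝⁿ and q₂ : ℝ → ℝᵐ are differentiable and satisfy the Arrow–Hurwicz–Uzawa flow: q₁'(t) = −∇_{q₁}L(q₁(t), q₂(t)) and q₂'(t) = g(q₁(t)) for all t. Define q₃(t) := −∇_{q₁}L(q₁(t), q₂(t)) and q₄(t) := g(q₁(t)). Then q₃ and q₄ are differentiable and satisfy (q₃'(t), q₄'(t)) = −K_A(q₁(t), q₂(t))ᵀ · (q₃(t), q₄(t)) for all t, where K_A(q₁,q₂) := [[∂²_{q₁}L(q₁,q₂), −[Dg(q₁)]ᵀ],[Dg(q₁), 0]] is the asymmetric KKT matrix. -/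

import Mathlib

open scoped RealInnerProductSpace

open ContinuousLinearMap in
/-- The adjoint, over ℝ, as a continuous linear map on the space of CLMs. -/
noncomputable def adjCLM {n m : ℕ} :
    (EuclideanSpace ℝ (Fin n) →L[ℝ] EuclideanSpace ℝ (Fin m)) →L[ℝ]
      (EuclideanSpace ℝ (Fin m) →L[ℝ] EuclideanSpace ℝ (Fin n)) :=
  LinearMap.mkContinuous
    { toFun := fun A => ContinuousLinearMap.adjoint A
      map_add' := fun A B => by simp
      map_smul' := fun r A => by
        simp [LinearIsometryEquiv.map_smulₛₗ, starRingEnd_apply] }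
    1 (fun A => by simp)


/-- **The Arrow–Hurwicz–Uzawa flow drives the optimality residuals by `-K_Aᵀ`
(Proposition 6.2, Eq. (6.17)).**
For the equality-constrained problem (N₀) with twice continuously differentiable data
`g₀, g` and Lagrangian `L(q₁,q₂) = g₀(q₁) + ⟨q₂, g(q₁)⟩`, suppose `q₁, q₂` obey the
Arrow–Hurwicz–Uzawa flow `q₁' = -∇_{q₁}L(q₁,q₂)`, `q₂' = g(q₁)`. Then the residuals
`q₃ = -∇_{q₁}L(q₁,q₂)` and `q₄ = g(q₁)` are differentiable and satisfy
`(q₃', q₄') = -K_Aᵀ (q₃, q₄)`, where `K_A = [[∂²_{q₁}L, -(Dg)ᵀ],[Dg, 0]]` is the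
asymmetric KKT matrix, i.e. `q₃' = -(∂²_{q₁}L) q₃ - (Dg)ᵀ q₄` and `q₄' = (Dg) q₃`.
Here `∇_{q₁}L(x,y) = ∇g₀(x) + (Dg(x))ᵀ y` is encoded by `gradL`, the Hessian
`∂²_{q₁}L` as the Fréchet derivative of `x ↦ gradL x y`, and `(Dg)ᵀ` as the adjoint of
the Fréchet derivative of `g`. -/
theorem ahu_flow_residual_dynamics {n m : ℕ}
    (g₀ : EuclideanSpace ℝ (Fin n) → ℝ)
    (g : EuclideanSpace ℝ (Fin n) → EuclideanSpace ℝ (Fin m))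
    (hg₀ : ContDiff ℝ 2 g₀) (hg : ContDiff ℝ 2 g)
    (gradL : EuclideanSpace ℝ (Fin n) → EuclideanSpace ℝ (Fin m) →
      EuclideanSpace ℝ (Fin n))
    (hgradL : ∀ x y, gradL x y =
      gradient g₀ x + ContinuousLinearMap.adjoint (fderiv ℝ g x) y)
    (q₁ : ℝ → EuclideanSpace ℝ (Fin n)) (q₂ : ℝ → EuclideanSpace ℝ (Fin m))
    (hq₁ : ∀ t, HasDerivAt q₁ (-gradL (q₁ t) (q₂ t)) t)
    (hq₂ : ∀ t, HasDerivAt q₂ (g (q₁ t)) t)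
    (q₃ : ℝ → EuclideanSpace ℝ (Fin n))
    (hq₃ : ∀ t, q₃ t = -gradL (q₁ t) (q₂ t))
    (q₄ : ℝ → EuclideanSpace ℝ (Fin m))
    (hq₄ : ∀ t, q₄ t = g (q₁ t)) :
    ∀ t : ℝ,
      HasDerivAt q₃
        (-(fderiv ℝ (fun x => gradL x (q₂ t)) (q₁ t) (q₃ t))
          - ContinuousLinearMap.adjoint (fderiv ℝ g (q₁ t)) (q₄ t)) t ∧
      HasDerivAt q₄ (fderiv ℝ g (q₁ t) (q₃ t)) t := by
  intro t₀
  have h12 : (1 : WithTop ℕ∞) + 1 ≤ 2 := by norm_num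
  have hq₁' : HasDerivAt q₁ (q₃ t₀) t₀ := (hq₃ t₀).symm ▸ hq₁ t₀
  -- q₄ part
  have hgd : DifferentiableAt ℝ g (q₁ t₀) :=
    (hg.differentiable (by norm_num)).differentiableAt
  have h4 : HasDerivAt q₄ (fderiv ℝ g (q₁ t₀) (q₃ t₀)) t₀ := by
    have := hgd.hasFDerivAt.comp_hasDerivAt t₀ hq₁'
    exact this.congr_of_eventuallyEq (Filter.Eventually.of_forall fun t => hq₄ t)
  refine ⟨?_, h4⟩
  -- q₃ part
  set x₀ := q₁ t₀ with hx₀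
  set y₀ := q₂ t₀ with hy₀
  have hgrad : ContDiff ℝ 1 (gradient g₀) := by
    have : gradient g₀ = fun x => (InnerProductSpace.toDual ℝ
        (EuclideanSpace ℝ (Fin n))).symm (fderiv ℝ g₀ x) := rfl
    rw [this]
    exact (InnerProductSpace.toDual ℝ _).symm.contDiff.comp (hg₀.fderiv_right h12)
  have hfg : ContDiff ℝ 1 (fderiv ℝ g) := hg.fderiv_right h12
  have hAc : ContDiff ℝ 1 (fun x => adjCLM (fderiv ℝ g x)) :=
    adjCLM.contDiff.comp hfg
  -- differentiability of ψ = fun x => gradL x y₀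
  have hψeq : (fun x => gradL x y₀) =
      fun x => gradient g₀ x + adjCLM (fderiv ℝ g x) y₀ := by
    funext x; exact hgradL x y₀
  have hψd : DifferentiableAt ℝ (fun x => gradL x y₀) x₀ := by
    rw [hψeq]
    exact ((hgrad.differentiable one_ne_zero).differentiableAt).add
      (((hAc.clm_apply contDiff_const).differentiable one_ne_zero).differentiableAt)
  have hψ : HasFDerivAt (fun x => gradL x y₀)
      (fderiv ℝ (fun x => gradL x y₀) x₀) x₀ := hψd.hasFDerivAt
  have hΦ₁ : HasDerivAt (fun t => gradL (q₁ t) y₀)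
      (fderiv ℝ (fun x => gradL x y₀) x₀ (q₃ t₀)) t₀ :=
    hψ.comp_hasDerivAt t₀ hq₁'
  -- the A(q₁ t) (q₂ t - y₀) part
  have hfgd : HasFDerivAt (fderiv ℝ g) (fderiv ℝ (fderiv ℝ g) x₀) x₀ :=
    ((hfg.differentiable one_ne_zero).differentiableAt).hasFDerivAt
  have hAder : HasDerivAt (fun t => adjCLM (fderiv ℝ g (q₁ t)))
      (adjCLM ((fderiv ℝ (fderiv ℝ g) x₀) (q₃ t₀))) t₀ := by
    have := (adjCLM.hasFDerivAt.comp x₀ hfgd).comp_hasDerivAt t₀ hq₁'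
    exact this
  have hu : HasDerivAt (fun t => q₂ t - y₀) (g x₀) t₀ := (hq₂ t₀).sub_const y₀
  have hprod : HasDerivAt (fun t => adjCLM (fderiv ℝ g (q₁ t)) (q₂ t - y₀))
      (adjCLM (fderiv ℝ g x₀) (g x₀)) t₀ := by
    have := hAder.clm_apply hu
    simpa [← hy₀] using this
  have hΦ : HasDerivAt (fun t => gradL (q₁ t) (q₂ t))
      (fderiv ℝ (fun x => gradL x y₀) x₀ (q₃ t₀)
        + adjCLM (fderiv ℝ g x₀) (g x₀)) t₀ := by
    have := hΦ₁.add hprod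
    refine this.congr_of_eventuallyEq (Filter.Eventually.of_forall fun t => ?_)
    show gradL (q₁ t) (q₂ t) = gradL (q₁ t) y₀ + adjCLM (fderiv ℝ g (q₁ t)) (q₂ t - y₀)
    have : (adjCLM (fderiv ℝ g (q₁ t)) : _) = ContinuousLinearMap.adjoint (fderiv ℝ g (q₁ t)) := rfl
    rw [hgradL, hgradL, this, map_sub]
    abel
  have h3 : HasDerivAt q₃
      (-(fderiv ℝ (fun x => gradL x y₀) x₀ (q₃ t₀)
        + adjCLM (fderiv ℝ g x₀) (g x₀))) t₀ :=
    hΦ.neg.congr_of_eventuallyEq (Filter.Eventually.of_forall fun t => hq₃ t)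
  have heq : -(fderiv ℝ (fun x => gradL x y₀) x₀ (q₃ t₀)
        + adjCLM (fderiv ℝ g x₀) (g x₀))
      = -(fderiv ℝ (fun x => gradL x (q₂ t₀)) (q₁ t₀) (q₃ t₀))
          - ContinuousLinearMap.adjoint (fderiv ℝ g (q₁ t₀)) (q₄ t₀) := by
    rw [hq₄]
    have : (adjCLM (fderiv ℝ g x₀) : _) = ContinuousLinearMap.adjoint (fderiv ℝ g x₀) := rfl
    rw [this, neg_add]
    rfl
  exact heq ▸ h3
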